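/- Fix k ≥ 2, δ ∈ (0,1), and ξ ≥ (2(k+1)!/δ²)·ln n. If S is a multiset of ξ permutations of [n] each drawn independently and uniformly at random, then with probability at least 1 - 1/n, the uniform distribution over S satisfies the (k,δ)-uniform-induced-ordering property. -/

import Mathlib

open scoped Classical

noncomputable section

lemma exp_neg_le_quad {x : ℝ} (hx : 0 ≤ x) : Real.exp (-x) ≤ 1 - x + x ^ 2 / 2 := by
  set f : ℝ → ℝ := fun y => 1 - y + y ^ 2 / 2 - Real.exp (-y) with hf
  have hd : ∀ y : ℝ, HasDerivAt f (-1 + 2 * y ^ 1 / 2 - Real.exp (-y) * (-1)) y := by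
    intro y
    have h1 : HasDerivAt (fun y : ℝ => -y) (-1) y := (hasDerivAt_id y).neg
    have h2 : HasDerivAt (fun y : ℝ => Real.exp (-y)) (Real.exp (-y) * (-1)) y := h1.exp
    have h3 : HasDerivAt (fun y : ℝ => 1 - y + y ^ 2 / 2)
        (0 - 1 + 2 * y ^ 1 / 2) y :=
      (((hasDerivAt_const y (1:ℝ)).sub (hasDerivAt_id y)).add ((hasDerivAt_pow 2 y).div_const 2))
    exact (h3.sub h2).congr_deriv (by ring)
  have hmono : Monotone f := by
    apply monotone_of_deriv_nonneg
    · exact fun y => (hd y).differentiableAt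
    · intro y
      rw [(hd y).deriv]
      have := Real.add_one_le_exp (-y)
      nlinarith [Real.exp_pos (-y)]
  have h0 : f 0 = 0 := by simp [hf]
  have := hmono hx
  rw [h0] at this
  simp only [hf] at this
  linarith

lemma perm_strictMono_eq_one {k : ℕ} (σ : Equiv.Perm (Fin k)) (h : StrictMono ⇑σ) : σ = 1 := by
  have h2 : ∀ i, σ i = i := by
    intro i
    have := Fin.coe_orderIso_apply (StrictMono.orderIsoOfSurjective ⇑σ h σ.surjective) i
    exact Fin.ext (by simpa using this)
  exact Equiv.ext h2

lemma card_strictMono_mul_factorial {n k : ℕ} (x : Fin k → Fin n)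
    (hx : Function.Injective x) :
    (Finset.univ.filter (fun π : Equiv.Perm (Fin n) =>
        StrictMono (fun i => π (x i)))).card * Nat.factorial k
      = Fintype.card (Equiv.Perm (Fin n)) := by
  classical
  set ι : Fin k ↪ Fin n := ⟨x, hx⟩ with hι
  set e : Equiv.Perm (Fin k) →* Equiv.Perm (Fin n) := Equiv.Perm.viaEmbeddingHom ι with he
  have happ : ∀ (σ : Equiv.Perm (Fin k)) (i : Fin k), (e σ) (x i) = x (σ i) := by
    intro σ i
    simpa [he, hι, Equiv.Perm.viaEmbeddingHom_apply] using Equiv.Perm.viaEmbedding_apply σ ι i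
  have key : Function.Bijective (fun pσ : {π : Equiv.Perm (Fin n) //
      StrictMono (fun i => π (x i))} × Equiv.Perm (Fin k) => pσ.1.1 * e pσ.2) := by
    constructor
    · rintro ⟨⟨π, hπ⟩, σ⟩ ⟨⟨π', hπ'⟩, σ'⟩ hpp
      simp only at hpp
      have hππ' : π = π' * e (σ' * σ⁻¹) := by
        rw [map_mul, map_inv, ← mul_assoc]
        exact eq_mul_inv_of_mul_eq hpp
      have hcomp : ∀ i, π (x i) = π' (x ((σ' * σ⁻¹) i)) := by
        intro i
        rw [hππ', Equiv.Perm.mul_apply, happ]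
      have hτ : StrictMono ⇑(σ' * σ⁻¹) := by
        intro i j hij
        have h1 : π (x i) < π (x j) := hπ hij
        rw [hcomp i, hcomp j] at h1
        exact hπ'.lt_iff_lt.mp h1
      have hτ1 : σ' * σ⁻¹ = 1 := perm_strictMono_eq_one _ hτ
      have hσ : σ' = σ := mul_inv_eq_one.mp hτ1
      subst hσ
      have hπeq : π = π' := by rw [hππ', hτ1, map_one, mul_one]
      exact Prod.ext (Subtype.ext hπeq) rfl
    · intro ρ
      set σs := Tuple.sort (fun i => ρ (x i)) with hσs
      have hmono : Monotone ((fun i => ρ (x i)) ∘ ⇑σs) := Tuple.monotone_sort _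
      have hinj : Function.Injective ((fun i => ρ (x i)) ∘ ⇑σs) :=
        (ρ.injective.comp hx).comp σs.injective
      have hsm : StrictMono (fun i => (ρ * e σs) (x i)) := by
        have heq : (fun i => (ρ * e σs) (x i)) = (fun i => ρ (x i)) ∘ ⇑σs := by
          funext i
          simp only [Function.comp_apply, Equiv.Perm.mul_apply, happ]
        rw [heq]
        exact hmono.strictMono_of_injective hinj
      refine ⟨⟨⟨ρ * e σs, hsm⟩, σs⁻¹⟩, ?_⟩
      simp only [mul_assoc, ← map_mul, mul_inv_cancel, map_one, mul_one]
  have hcard := Fintype.card_of_bijective key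
  rw [Fintype.card_prod, Fintype.card_subtype, Fintype.card_perm, Fintype.card_fin] at hcard
  exact hcard

lemma chernoff_count {n ξ : ℕ} (A : Finset (Equiv.Perm (Fin n))) (δ p : ℝ)
    (hδ0 : 0 < δ) (hp0 : 0 ≤ p) (hp1 : p ≤ 1)
    (hp : (A.card : ℝ) = p * (Fintype.card (Equiv.Perm (Fin n)) : ℝ)) :
    ((Finset.univ.filter (fun S : Fin ξ → Equiv.Perm (Fin n) =>
        ((Finset.univ.filter (fun i => S i ∈ A)).card : ℝ) < (1 - δ) * p * ξ)).card : ℝ)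
      ≤ Real.exp (-(δ ^ 2 * p * ξ) / 2) * (Fintype.card (Equiv.Perm (Fin n)) : ℝ) ^ ξ := by
  classical
  set N : ℕ := Fintype.card (Equiv.Perm (Fin n)) with hN
  set a : ℝ := (1 - δ) * p * ξ with ha
  set cnt : (Fin ξ → Equiv.Perm (Fin n)) → ℕ :=
    fun S => (Finset.univ.filter (fun i => S i ∈ A)).card with hcnt
  set g : Equiv.Perm (Fin n) → ℝ :=
    fun q => Real.exp (-δ * (if q ∈ A then 1 else 0)) with hg
  have step1 : ((Finset.univ.filter (fun S => (cnt S : ℝ) < a)).card : ℝ)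
      ≤ ∑ S : Fin ξ → Equiv.Perm (Fin n), Real.exp (δ * (a - cnt S)) := by
    rw [Finset.card_filter, Nat.cast_sum]
    apply Finset.sum_le_sum
    intro S _
    by_cases h : (cnt S : ℝ) < a
    · simp only [h, if_true, Nat.cast_one]
      have : 0 ≤ δ * (a - cnt S) := by nlinarith
      simpa using Real.one_le_exp this
    · simp only [h, if_false, Nat.cast_zero]
      positivity
  have prodform : ∀ S : Fin ξ → Equiv.Perm (Fin n),
      Real.exp (δ * (a - cnt S)) = Real.exp (δ * a) * ∏ i : Fin ξ, g (S i) := by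
    intro S
    have hsum : ∑ i : Fin ξ, (if S i ∈ A then (1:ℝ) else 0) = (cnt S : ℝ) := by
      rw [hcnt]
      simp [Finset.sum_boole]
    rw [hg]
    simp only
    rw [← Real.exp_sum, ← Real.exp_add]
    congr 1
    rw [← Finset.mul_sum, hsum]
    ring
  have step3 : ∑ S : Fin ξ → Equiv.Perm (Fin n), ∏ i : Fin ξ, g (S i)
      = (∑ q : Equiv.Perm (Fin n), g q) ^ ξ := by
    rw [← Fintype.piFinset_univ,
      ← Finset.prod_univ_sum (fun _ : Fin ξ => (Finset.univ : Finset (Equiv.Perm (Fin n))))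
      (fun _ q => g q)]
    simp
  have step4 : ∑ q : Equiv.Perm (Fin n), g q
      = (N : ℝ) * (1 + p * (Real.exp (-δ) - 1)) := by
    rw [hg]
    simp only [mul_ite, mul_one, mul_zero, apply_ite Real.exp, Real.exp_zero]
    rw [Finset.sum_ite, Finset.sum_const, Finset.sum_const]
    simp only [nsmul_eq_mul, mul_one]
    have h1 : (Finset.univ.filter (fun q : Equiv.Perm (Fin n) => q ∈ A)).card = A.card := by
      congr 1
      ext q
      simp
    have h2 : (Finset.univ.filter (fun q : Equiv.Perm (Fin n) => ¬ q ∈ A)).card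
        = N - A.card := by
      rw [Finset.filter_not, Finset.card_sdiff_of_subset (Finset.filter_subset _ _), h1,
        Finset.card_univ]
    rw [h1, h2]
    have hAN : A.card ≤ N := by
      rw [hN, ← Finset.card_univ]
      exact Finset.card_le_card (Finset.subset_univ A)
    have : ((N - A.card : ℕ) : ℝ) = (N : ℝ) - A.card := by
      rw [Nat.cast_sub hAN]
    rw [this, hp]
    ring
  have hbase0 : 0 ≤ 1 + p * (Real.exp (-δ) - 1) := by
    nlinarith [Real.exp_pos (-δ), Real.exp_le_one_iff.mpr (neg_nonpos.mpr hδ0.le)]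
  have hbase : 1 + p * (Real.exp (-δ) - 1) ≤ Real.exp (p * (Real.exp (-δ) - 1)) := by
    linarith [Real.add_one_le_exp (p * (Real.exp (-δ) - 1))]
  calc ((Finset.univ.filter (fun S => (cnt S : ℝ) < a)).card : ℝ)
      ≤ ∑ S : Fin ξ → Equiv.Perm (Fin n), Real.exp (δ * (a - cnt S)) := step1
    _ = Real.exp (δ * a) * (∑ q : Equiv.Perm (Fin n), g q) ^ ξ := by
        rw [← step3, Finset.mul_sum]
        exact Finset.sum_congr rfl fun S _ => prodform S
    _ = Real.exp (δ * a) * ((N : ℝ) * (1 + p * (Real.exp (-δ) - 1))) ^ ξ := by rw [step4]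
    _ ≤ Real.exp (δ * a) * ((N : ℝ) * Real.exp (p * (Real.exp (-δ) - 1))) ^ ξ := by
        apply mul_le_mul_of_nonneg_left _ (Real.exp_pos _).le
        apply pow_le_pow_left₀ (by positivity)
        apply mul_le_mul_of_nonneg_left hbase (Nat.cast_nonneg N)
    _ = Real.exp (δ * a + ξ * (p * (Real.exp (-δ) - 1))) * (N : ℝ) ^ ξ := by
        rw [mul_pow, ← Real.exp_nat_mul, Real.exp_add]
        ring
    _ ≤ Real.exp (-(δ ^ 2 * p * ξ) / 2) * (N : ℝ) ^ ξ := by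
        apply mul_le_mul_of_nonneg_right _ (by positivity)
        apply Real.exp_le_exp.mpr
        have hquad : Real.exp (-δ) ≤ 1 - δ + δ ^ 2 / 2 := exp_neg_le_quad hδ0.le
        have hξ0 : (0:ℝ) ≤ (ξ : ℝ) := Nat.cast_nonneg ξ
        rw [ha]
        nlinarith [mul_nonneg (mul_nonneg hξ0 hp0)
          (by linarith : (0:ℝ) ≤ 1 - δ + δ ^ 2 / 2 - Real.exp (-δ))]

/-- Probability of an event under a distribution `μ` on permutations of `Fin n`. -/
def prOf {n : ℕ} (μ : Equiv.Perm (Fin n) → ℝ) (E : Set (Equiv.Perm (Fin n))) : ℝ :=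
  ∑ π : Equiv.Perm (Fin n), if π ∈ E then μ π else 0

/-- The `(k,δ)`-uniform-induced-ordering property. -/
def UIOP (n k : ℕ) (δ : ℝ) (μ : Equiv.Perm (Fin n) → ℝ) : Prop :=
  ∀ x : Fin k → Fin n, Function.Injective x →
    (1 - δ) / (Nat.factorial k : ℝ) ≤ prOf μ {π | StrictMono (fun i => π (x i))}

/-- The uniform (empirical) distribution over a multiset of `ξ` permutations,
given as a function `S : Fin ξ → Equiv.Perm (Fin n)`. -/
def empDist {n ξ : ℕ} (S : Fin ξ → Equiv.Perm (Fin n)) : Equiv.Perm (Fin n) → ℝ :=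
  fun π => ((Finset.univ.filter (fun i => S i = π)).card : ℝ) / ξ

lemma prOf_empDist {n ξ : ℕ} (S : Fin ξ → Equiv.Perm (Fin n)) (E : Set (Equiv.Perm (Fin n))) :
    prOf (empDist S) E = ((Finset.univ.filter (fun i => S i ∈ E)).card : ℝ) / ξ := by
  classical
  unfold prOf empDist
  rw [← Finset.sum_filter, ← Finset.sum_div]
  congr 1
  rw [← Nat.cast_sum]
  norm_cast
  have hfib := Finset.card_eq_sum_card_fiberwise
    (s := Finset.univ.filter (fun i => S i ∈ E))
    (t := Finset.univ.filter (fun q : Equiv.Perm (Fin n) => q ∈ E)) (f := S)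
    (fun i hi => by
      simp only [Finset.mem_coe, Finset.mem_filter, Finset.mem_univ, true_and] at hi ⊢
      exact hi)
  rw [hfib]
  apply Finset.sum_congr rfl
  intro q hq
  simp only [Finset.mem_filter, Finset.mem_univ, true_and] at hq
  congr 1
  ext i
  simp only [Finset.mem_filter, Finset.mem_univ, true_and, Finset.filter_filter]
  exact ⟨fun h => ⟨h ▸ hq, h⟩, fun h => h.2⟩

theorem random_multiset_uiop (n k ξ : ℕ) (hn : 0 < n) (hk : 2 ≤ k) (δ : ℝ)
    (hδ0 : 0 < δ) (hδ1 : δ < 1)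
    (hξ : 2 * ((Nat.factorial (k + 1) : ℝ) / δ ^ 2) * Real.log n ≤ ξ) :
    (1 - 1 / (n : ℝ)) * (Fintype.card (Fin ξ → Equiv.Perm (Fin n)) : ℝ) ≤
      (Nat.card {S : Fin ξ → Equiv.Perm (Fin n) // UIOP n k δ (empDist S)} : ℝ) := by
  classical
  have hcard_subtype :
      (Nat.card {S : Fin ξ → Equiv.Perm (Fin n) // UIOP n k δ (empDist S)} : ℝ)
        = ((Finset.univ.filter (fun S : Fin ξ → Equiv.Perm (Fin n) =>
            UIOP n k δ (empDist S))).card : ℝ) := by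
    rw [Nat.card_eq_fintype_card, Fintype.card_subtype]
  rcases lt_or_ge n k with hkn | hkn
  · -- vacuous case: no injective map Fin k → Fin n
    have hall : ∀ S : Fin ξ → Equiv.Perm (Fin n), UIOP n k δ (empDist S) := by
      intro S x hx
      have hle := Fintype.card_le_of_injective x hx
      simp only [Fintype.card_fin] at hle
      omega
    rw [hcard_subtype, Finset.filter_true_of_mem (fun S _ => hall S), Finset.card_univ]
    apply mul_le_of_le_one_left (Nat.cast_nonneg _)
    have h0 : 0 ≤ 1 / (n:ℝ) := by positivity
    linarith
  -- main case: k ≤ n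
  have hn2 : 2 ≤ n := hk.trans hkn
  have hn0R : (0:ℝ) < n := by exact_mod_cast hn
  have hn1R : (1:ℝ) < n := by exact_mod_cast (by omega : 1 < n)
  have hlog : 0 < Real.log n := Real.log_pos hn1R
  have hfk : (0:ℝ) < (Nat.factorial k : ℝ) := by exact_mod_cast Nat.factorial_pos k
  have hfk1 : (0:ℝ) < (Nat.factorial (k+1) : ℝ) := by exact_mod_cast Nat.factorial_pos (k+1)
  have hξR : (0:ℝ) < (ξ:ℝ) := by
    refine lt_of_lt_of_le ?_ hξ
    apply mul_pos (mul_pos two_pos (div_pos hfk1 (by positivity))) hlog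
  set N : ℕ := Fintype.card (Equiv.Perm (Fin n)) with hNdef
  set p : ℝ := 1 / (Nat.factorial k : ℝ) with hpdef
  have hp0 : 0 ≤ p := by positivity
  have hp1 : p ≤ 1 := by
    rw [hpdef, div_le_one hfk]
    exact_mod_cast Nat.one_le_iff_ne_zero.mpr (Nat.factorial_ne_zero k)
  set A : (Fin k → Fin n) → Finset (Equiv.Perm (Fin n)) :=
    fun x => Finset.univ.filter (fun q : Equiv.Perm (Fin n) =>
      StrictMono (fun i => q (x i))) with hAdef
  have hA : ∀ x : Fin k → Fin n, Function.Injective x → ((A x).card : ℝ) = p * N := by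
    intro x hx
    have h1 := card_strictMono_mul_factorial x hx
    have h2 : ((A x).card : ℝ) * (Nat.factorial k : ℝ) = (N : ℝ) := by
      rw [hAdef]
      exact_mod_cast h1
    rw [hpdef]
    field_simp
    linarith
  set Bad : Finset (Fin ξ → Equiv.Perm (Fin n)) :=
    Finset.univ.filter (fun S => ¬ UIOP n k δ (empDist S)) with hBaddef
  set badAt : (Fin k → Fin n) → Finset (Fin ξ → Equiv.Perm (Fin n)) :=
    fun x => Finset.univ.filter (fun S : Fin ξ → Equiv.Perm (Fin n) =>
      ((Finset.univ.filter (fun i => S i ∈ A x)).card : ℝ) < (1 - δ) * p * ξ) with hbadAtdef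
  set injF : Finset (Fin k → Fin n) :=
    Finset.univ.filter (fun x : Fin k → Fin n => Function.Injective x) with hinjFdef
  have hsub : Bad ⊆ injF.biUnion badAt := by
    intro S hS
    rw [hBaddef, Finset.mem_filter] at hS
    obtain ⟨-, hS⟩ := hS
    rw [UIOP] at hS
    push_neg at hS
    obtain ⟨x, hxinj, hlt⟩ := hS
    rw [prOf_empDist] at hlt
    refine Finset.mem_biUnion.mpr ⟨x, by simp [hinjFdef, hxinj], ?_⟩
    rw [hbadAtdef]
    simp only [Finset.mem_filter, Finset.mem_univ, true_and]
    have key : ((Finset.univ.filter (fun i => S i ∈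
        {q : Equiv.Perm (Fin n) | StrictMono fun j => q (x j)})).card : ℝ)
        < (1 - δ) * p * ξ := by
      have h2 := (div_lt_div_iff₀ hξR hfk).mp hlt
      have h3 : (1 - δ) * p * (ξ:ℝ) = ((1 - δ) * ξ) / (Nat.factorial k : ℝ) := by
        rw [hpdef]; ring
      rw [h3, lt_div_iff₀ hfk]
      convert h2 using 3
      exact congrArg Finset.card
        (@Finset.filter_congr _ _ _
          (fun a => Set.decidableSetOf (S a) fun q => StrictMono fun j => q (x j))
          (fun a => Classical.propDecidable (S a ∈ {π | StrictMono fun i => π (x i)}))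
          _ (fun i _ => Iff.rfl))
    have heq : (Finset.univ.filter (fun i => S i ∈ A x))
        = (Finset.univ.filter (fun i => S i ∈
          {q : Equiv.Perm (Fin n) | StrictMono fun j => q (x j)})) :=
      Finset.filter_congr (fun i _ => by simp [hAdef])
    rw [heq]
    exact key
  have hchern : ∀ x ∈ injF, ((badAt x).card : ℝ)
      ≤ Real.exp (-(δ ^ 2 * p * ξ) / 2) * (N : ℝ) ^ ξ := by
    intro x hx
    rw [hinjFdef, Finset.mem_filter] at hx
    have h := chernoff_count (ξ := ξ) (A x) δ p hδ0 hp0 hp1 (hA x hx.2)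
    rw [hbadAtdef]
    exact h
  have hNpow0 : (0:ℝ) ≤ (N:ℝ) ^ ξ := by positivity
  have hBad1 : (Bad.card : ℝ)
      ≤ (injF.card : ℝ) * (Real.exp (-(δ ^ 2 * p * ξ) / 2) * (N : ℝ) ^ ξ) := by
    have h1 : Bad.card ≤ ∑ x ∈ injF, (badAt x).card :=
      le_trans (Finset.card_le_card hsub) Finset.card_biUnion_le
    calc (Bad.card : ℝ) ≤ ∑ x ∈ injF, ((badAt x).card : ℝ) := by exact_mod_cast h1
      _ ≤ ∑ _x ∈ injF, Real.exp (-(δ ^ 2 * p * ξ) / 2) * (N : ℝ) ^ ξ :=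
          Finset.sum_le_sum hchern
      _ = (injF.card : ℝ) * (Real.exp (-(δ ^ 2 * p * ξ) / 2) * (N : ℝ) ^ ξ) := by
          rw [Finset.sum_const, nsmul_eq_mul]
  have hinjcard : (injF.card : ℝ) ≤ (n : ℝ) ^ k := by
    have h1 : injF.card ≤ Fintype.card (Fin k → Fin n) := by
      rw [hinjFdef, ← Finset.card_univ]
      exact Finset.card_le_card (Finset.filter_subset _ _)
    have h2 : Fintype.card (Fin k → Fin n) = n ^ k := by
      rw [Fintype.card_fun, Fintype.card_fin, Fintype.card_fin]
    rw [h2] at h1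
    exact_mod_cast h1
  have hfs : ((Nat.factorial (k + 1) : ℝ)) = ((k : ℝ) + 1) * (Nat.factorial k : ℝ) := by
    rw [Nat.factorial_succ]
    push_cast
    ring
  have hkey : ((k : ℝ) + 1) * Real.log n ≤ δ ^ 2 * p * ξ / 2 := by
    have hpos : (0:ℝ) < δ ^ 2 / (2 * (Nat.factorial k : ℝ)) := by positivity
    have key := mul_le_mul_of_nonneg_left hξ hpos.le
    have e1 : δ ^ 2 / (2 * (Nat.factorial k : ℝ))
        * (2 * ((Nat.factorial (k + 1) : ℝ) / δ ^ 2) * Real.log n)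
        = ((k : ℝ) + 1) * Real.log n := by
      rw [hfs]
      field_simp
    have e2 : δ ^ 2 / (2 * (Nat.factorial k : ℝ)) * (ξ : ℝ) = δ ^ 2 * p * ξ / 2 := by
      rw [hpdef]
      field_simp
    rw [e1, e2] at key
    exact key
  have hexp : Real.exp (-(δ ^ 2 * p * ξ) / 2) ≤ 1 / (n : ℝ) ^ (k + 1) := by
    have hnpow : Real.exp (-(((k : ℝ) + 1) * Real.log n)) = 1 / (n : ℝ) ^ (k + 1) := by
      rw [Real.exp_neg, one_div]
      congr 1
      rw [show ((k : ℝ) + 1) = ((k + 1 : ℕ) : ℝ) by push_cast; ring, Real.exp_nat_mul,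
        Real.exp_log hn0R]
    rw [← hnpow]
    apply Real.exp_le_exp.mpr
    linarith
  have hBadFinal : (Bad.card : ℝ) ≤ (1 / (n : ℝ)) * (N : ℝ) ^ ξ := by
    calc (Bad.card : ℝ)
        ≤ (injF.card : ℝ) * (Real.exp (-(δ ^ 2 * p * ξ) / 2) * (N : ℝ) ^ ξ) := hBad1
      _ ≤ (n : ℝ) ^ k * ((1 / (n : ℝ) ^ (k + 1)) * (N : ℝ) ^ ξ) := by
          apply mul_le_mul hinjcard (mul_le_mul_of_nonneg_right hexp hNpow0)
            (by positivity) (by positivity)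
      _ = (1 / (n : ℝ)) * (N : ℝ) ^ ξ := by
          rw [pow_succ]
          field_simp
  have htotR : (Fintype.card (Fin ξ → Equiv.Perm (Fin n)) : ℝ) = (N : ℝ) ^ ξ := by
    rw [Fintype.card_fun, Fintype.card_fin]
    push_cast
    rw [hNdef]
  have hsplit : ((Finset.univ.filter (fun S : Fin ξ → Equiv.Perm (Fin n) =>
        UIOP n k δ (empDist S))).card : ℝ)
      = (Fintype.card (Fin ξ → Equiv.Perm (Fin n)) : ℝ) - (Bad.card : ℝ) := by
    have h := Finset.card_filter_add_card_filter_not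
      (s := (Finset.univ : Finset (Fin ξ → Equiv.Perm (Fin n))))
      (p := fun S => UIOP n k δ (empDist S))
    rw [Finset.card_univ] at h
    rw [hBaddef]
    have h2 := congrArg (Nat.cast : ℕ → ℝ) h
    push_cast at h2
    linarith
  rw [hcard_subtype, hsplit, htotR]
  have hring : (1 - 1 / (n : ℝ)) * (N : ℝ) ^ ξ
      = (N : ℝ) ^ ξ - (1 / (n : ℝ)) * (N : ℝ) ^ ξ := by ring
  rw [hring]
  linarith
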